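/- Let ω ∈ [0,1], let Q = [[D, −C], [−B, A]] with A ∈ C^{m×m}, B ∈ C^{m×n}, C ∈ C^{n×m}, D ∈ C^{n×n}, and suppose Q_ω is a nonsingular M-matrix with Q_ω·1 > 0. Let Q̃ = [[D̃, −C̃], [−B̃, Ã]] be a real nonsingular M-matrix with Q̃ ≤ Q_ω and Q̃·1 > 0, and let Φ̃ be the minimal nonnegative solution of XC̃X − XD̃ − ÃX + B̃ = 0 (i.e., Φ̃ ≥ 0 solves it and Φ̃ ≤ Z entrywise for every entrywise nonnegative solution Z). Then the NARE XCX − XD − AX + B = 0 has exactly one solution Φ ∈ C^{m×n} satisfying |Φ| ≤ Φ̃ entrywise. -/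

import Mathlib

open Matrix Filter Kronecker

noncomputable section

/-- The ω-weighted linear functional `z ↦ ω·Re z + (1-ω)·Im z`. -/
def wlin (ω : ℝ) (z : ℂ) : ℝ := ω * z.re + (1 - ω) * z.im

/-- The ω-comparison matrix of a complex square matrix. -/
def omegaComp {N : Type*} [DecidableEq N] (ω : ℝ) (B : Matrix N N ℂ) : Matrix N N ℝ :=
  Matrix.of fun i j => if i = j then wlin ω (B i i) else -‖B i j‖

/-- A real square matrix is a nonsingular M-matrix: nonpositive off-diagonal entries and
`M *ᵥ u > 0` entrywise for some entrywise positive `u`. -/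
def IsNonsingMMatrix {N : Type*} [Fintype N] (M : Matrix N N ℝ) : Prop :=
  (∀ i j, i ≠ j → M i j ≤ 0) ∧ ∃ u : N → ℝ, (∀ i, 0 < u i) ∧ ∀ i, 0 < (M *ᵥ u) i

/-- Entrywise absolute value of a complex matrix. -/
def cabs {α β : Type*} (M : Matrix α β ℂ) : Matrix α β ℝ :=
  Matrix.of fun i j => ‖M i j‖

open Topology Finset

theorem wlin_le_abs {ω : ℝ} (hω : ω ∈ Set.Icc (0:ℝ) 1) (z : ℂ) :
    wlin ω z ≤ ‖z‖ := by
  obtain ⟨h0, h1⟩ := hω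
  have hre : z.re ≤ ‖z‖ := Complex.re_le_norm z
  have him : z.im ≤ ‖z‖ :=
    le_trans (le_abs_self _) (Complex.abs_im_le_norm z)
  calc wlin ω z = ω * z.re + (1 - ω) * z.im := rfl
    _ ≤ ω * ‖z‖ + (1 - ω) * ‖z‖ := by
        have e1 : ω * z.re ≤ ω * ‖z‖ := mul_le_mul_of_nonneg_left hre h0
        have e2 : (1 - ω) * z.im ≤ (1 - ω) * ‖z‖ :=
          mul_le_mul_of_nonneg_left him (by linarith)
        linarith
    _ = ‖z‖ := by ring

theorem wlin_add (ω : ℝ) (z w : ℂ) : wlin ω (z + w) = wlin ω z + wlin ω w := by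
  simp [wlin, Complex.add_re, Complex.add_im]
  ring

theorem aux2 {n : ℕ} (M : Matrix (Fin n) (Fin n) ℝ)
    (hoff : ∀ l j, l ≠ j → M l j ≤ 0) (hrow : ∀ l, 0 < ∑ j, M l j) :
    ∃ y : Fin n → ℝ, (∀ j, 0 < y j) ∧ ∀ j, 0 < ∑ l, y l * M l j := by
  cases isEmpty_or_nonempty (Fin n) with
  | inl h => exact ⟨fun _ => 1, fun j => isEmptyElim j, fun j => isEmptyElim j⟩
  | inr h =>
    have hsumle : ∀ j, (∑ l, M j l) ≤ M j j := by
      intro j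
      rw [← Finset.add_sum_erase Finset.univ (M j) (Finset.mem_univ j)]
      have : (∑ l ∈ Finset.univ.erase j, M j l) ≤ 0 :=
        Finset.sum_nonpos fun l hl => hoff j l (Ne.symm (Finset.ne_of_mem_erase hl))
      linarith
    have hdiag : ∀ j, 0 < M j j := fun j => lt_of_lt_of_le (hrow j) (hsumle j)
    obtain ⟨g, hg⟩ : ∃ g : (Fin n → ℝ) → (Fin n → ℝ), ∀ y j,
        g y j = ((∑ l ∈ Finset.univ.erase j, (-M l j) * y l) + 1) / M j j :=
      ⟨fun y j => ((∑ l ∈ Finset.univ.erase j, (-M l j) * y l) + 1) / M j j, fun _ _ => rfl⟩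
    have hcoef : ∀ j l, l ∈ Finset.univ.erase j → 0 ≤ -M l j := by
      intro j l hl
      simpa using hoff l j (Finset.ne_of_mem_erase hl)
    have gmono : ∀ y y' : Fin n → ℝ, (∀ l, y l ≤ y' l) → ∀ j, g y j ≤ g y' j := by
      intro y y' hle j
      rw [hg, hg, div_le_div_iff_of_pos_right (hdiag j)]
      have : (∑ l ∈ Finset.univ.erase j, (-M l j) * y l) ≤
          ∑ l ∈ Finset.univ.erase j, (-M l j) * y' l :=
        Finset.sum_le_sum fun l hl => mul_le_mul_of_nonneg_left (hle l) (hcoef j l hl)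
      linarith
    have gnonneg : ∀ y : Fin n → ℝ, (∀ l, 0 ≤ y l) → ∀ j, 0 ≤ g y j := by
      intro y hy j
      rw [hg]
      have : (0:ℝ) ≤ ∑ l ∈ Finset.univ.erase j, (-M l j) * y l :=
        Finset.sum_nonneg fun l hl => mul_nonneg (hcoef j l hl) (hy l)
      exact div_nonneg (by linarith) (le_of_lt (hdiag j))
    obtain ⟨ys, hys0, hyss⟩ : ∃ s : ℕ → (Fin n → ℝ), s 0 = 0 ∧ ∀ k, s (k+1) = g (s k) :=
      ⟨fun k => g^[k] 0, rfl, fun k => Function.iterate_succ_apply' g k 0⟩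
    have hnn : ∀ k l, 0 ≤ ys k l := by
      intro k
      induction k with
      | zero => simp [hys0]
      | succ k ih => rw [hyss]; exact gnonneg _ ih
    have hmono : ∀ k l, ys k l ≤ ys (k+1) l := by
      intro k
      induction k with
      | zero => intro l; rw [hys0, hyss, hys0]; exact gnonneg 0 (fun _ => le_refl 0) l
      | succ k ih => intro l; rw [hyss, hyss]; exact gmono _ _ ih l
    -- potential function bound
    set α := Finset.univ.inf' (Finset.univ_nonempty) (fun l => ∑ j, M l j) with hα
    have hα0 : 0 < α := by
      rw [hα]
      exact (Finset.lt_inf'_iff _).2 fun l _ => hrow l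
    have hαle : ∀ l, α ≤ ∑ j, M l j := fun l =>
      Finset.inf'_le _ (Finset.mem_univ l)
    set Δ := Finset.univ.sup' (Finset.univ_nonempty) (fun j => M j j) with hΔ
    have hΔle : ∀ j, M j j ≤ Δ := fun j => Finset.le_sup' (fun j => M j j) (Finset.mem_univ j)
    have hΔ0 : 0 < Δ := lt_of_lt_of_le (hdiag (Classical.arbitrary _)) (hΔle _)
    have hαΔ : α ≤ Δ := le_trans (hαle (Classical.arbitrary _))
      (le_trans (hsumle _) (hΔle _))
    -- potential φ
    have hφkey : ∀ y : Fin n → ℝ, (∀ l, 0 ≤ y l) →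
        (∑ j, M j j * g y j) ≤ (∑ j, M j j * y j) * (1 - α/Δ) + n := by
      intro y hy
      have hstep1 : ∀ j, M j j * g y j =
          (∑ l ∈ Finset.univ.erase j, (-M l j) * y l) + 1 := by
        intro j
        rw [hg, mul_div_cancel₀ _ (ne_of_gt (hdiag j))]
      have hstep2 : ∀ j, (∑ l ∈ Finset.univ.erase j, (-M l j) * y l) =
          (∑ l, (-M l j) * y l) - (-M j j) * y j := by
        intro j
        exact Finset.sum_erase_eq_sub (Finset.mem_univ j)
      calc (∑ j, M j j * g y j)
          = ∑ j, ((∑ l, (-M l j) * y l) - (-M j j) * y j + 1) := by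
            refine Finset.sum_congr rfl fun j _ => ?_
            rw [hstep1, hstep2]
        _ = (∑ j, ∑ l, (-M l j) * y l) + (∑ j, M j j * y j) + n := by
            rw [Finset.sum_add_distrib, Finset.sum_sub_distrib]
            simp [Finset.card_univ]
        _ ≤ (∑ l, y l * (-α)) + (∑ j, M j j * y j) + n := by
            have : (∑ j, ∑ l, (-M l j) * y l) = ∑ l, y l * (- ∑ j, M l j) := by
              rw [Finset.sum_comm]
              refine Finset.sum_congr rfl fun l _ => ?_
              rw [mul_neg, Finset.mul_sum, ← Finset.sum_neg_distrib]
              exact Finset.sum_congr rfl fun j _ => by ring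
            rw [this]
            have hterm : ∀ l, y l * (- ∑ j, M l j) ≤ y l * (-α) := fun l =>
              mul_le_mul_of_nonneg_left (neg_le_neg (hαle l)) (hy l)
            have := Finset.sum_le_sum (fun l (_ : l ∈ Finset.univ) => hterm l)
            linarith
        _ ≤ (∑ j, M j j * y j) * (1 - α/Δ) + n := by
            have h1 : (∑ j, M j j * y j) ≤ Δ * (∑ l, y l) := by
              rw [Finset.mul_sum]
              exact Finset.sum_le_sum fun j _ =>
                mul_le_mul_of_nonneg_right (hΔle j) (hy j)
            have h2 : (∑ l, y l * (-α)) ≤ -(α / Δ) * (∑ j, M j j * y j) := by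
              have : (∑ l, y l * (-α)) = -(α/Δ) * (Δ * (∑ l, y l)) := by
                rw [← Finset.sum_mul]
                field_simp
              rw [this]
              apply mul_le_mul_of_nonpos_left h1
              simp only [neg_nonpos]
              positivity
            linarith
    -- invariant bound on potential
    set Cp := (n : ℝ) * Δ / α with hCp
    have hCp0 : 0 ≤ Cp := by positivity
    have hinv : ∀ k, (∑ j, M j j * ys k j) ≤ Cp := by
      intro k
      induction k with
      | zero => simp [hys0, hCp0]
      | succ k ih =>
        rw [hyss]
        have h1 := hφkey (ys k) (hnn k)
        have h2 : (∑ j, M j j * ys k j) * (1 - α/Δ) ≤ Cp * (1 - α/Δ) := by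
          apply mul_le_mul_of_nonneg_right ih
          have : α / Δ ≤ 1 := (div_le_one hΔ0).2 hαΔ
          linarith
        have h3 : Cp * (1 - α/Δ) + n = Cp := by
          rw [hCp]
          field_simp
          ring
        linarith
    have hφlb : ∀ k j, M j j * ys k j ≤ ∑ j', M j' j' * ys k j' := by
      intro k j
      apply Finset.single_le_sum (f := fun j' => M j' j' * ys k j') ?_ (Finset.mem_univ j)
      intro l _
      exact mul_nonneg (le_of_lt (hdiag l)) (hnn k l)
    have hbd : ∀ k j, ys k j ≤ Cp / M j j := by
      intro k j
      rw [le_div_iff₀ (hdiag j)]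
      calc ys k j * M j j = M j j * ys k j := by ring
        _ ≤ _ := le_trans (hφlb k j) (hinv k)
    -- convergence
    have hmonoj : ∀ j, Monotone fun k => ys k j := fun j =>
      monotone_nat_of_le_succ fun k => hmono k j
    set yst : Fin n → ℝ := fun j => ⨆ k, ys k j with hyst
    have htend : ∀ j, Tendsto (fun k => ys k j) atTop (𝓝 (yst j)) := by
      intro j
      exact tendsto_atTop_ciSup (hmonoj j)
        ⟨Cp / M j j, by rintro x ⟨k, rfl⟩; exact hbd k j⟩
    have hstar_ge : ∀ k j, ys k j ≤ yst j := by
      intro k j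
      exact le_ciSup ⟨Cp / M j j, by rintro x ⟨k', rfl⟩; exact hbd k' j⟩ k
    have hpos : ∀ j, 0 < yst j := by
      intro j
      have h1 : ys 1 j = 1 / M j j := by
        rw [hyss, hys0, hg]
        simp
      have : (0:ℝ) < 1 / M j j := one_div_pos.2 (hdiag j)
      calc (0:ℝ) < ys 1 j := by rw [h1]; exact this
        _ ≤ yst j := hstar_ge 1 j
    -- fixed point equation
    have hfix : ∀ j, M j j * yst j = (∑ l ∈ Finset.univ.erase j, (-M l j) * yst l) + 1 := by
      intro j
      have t1 : Tendsto (fun k => M j j * ys (k+1) j) atTop (𝓝 (M j j * yst j)) :=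
        (((htend j).comp (tendsto_add_atTop_nat 1)).const_mul _)
      have t2 : Tendsto (fun k => M j j * ys (k+1) j) atTop
          (𝓝 ((∑ l ∈ Finset.univ.erase j, (-M l j) * yst l) + 1)) := by
        have heq : ∀ k, M j j * ys (k+1) j =
            (∑ l ∈ Finset.univ.erase j, (-M l j) * ys k l) + 1 := by
          intro k
          rw [hyss, hg, mul_div_cancel₀ _ (ne_of_gt (hdiag j))]
        simp only [heq]
        apply Tendsto.add_const
        exact tendsto_finset_sum _ fun l _ => (htend l).const_mul _
      exact tendsto_nhds_unique t1 t2
    refine ⟨yst, hpos, fun j => ?_⟩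
    have hsplit : (∑ l, yst l * M l j) =
        yst j * M j j + ∑ l ∈ Finset.univ.erase j, yst l * M l j :=
      (Finset.add_sum_erase Finset.univ (fun l => yst l * M l j) (Finset.mem_univ j)).symm
    have hcancel : (∑ l ∈ Finset.univ.erase j, ((-M l j) * yst l + yst l * M l j)) = 0 := by
      apply Finset.sum_eq_zero
      intro l _
      ring
    have : (∑ l, yst l * M l j) = 1 := by
      rw [hsplit, mul_comm (yst j), hfix j]
      rw [Finset.sum_add_distrib] at hcancel
      linarith
    rw [this]
    norm_num

theorem aux1 {m n : ℕ}
    (At : Matrix (Fin m) (Fin m) ℝ) (Bt : Matrix (Fin m) (Fin n) ℝ)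
    (Ct : Matrix (Fin n) (Fin m) ℝ) (Dt : Matrix (Fin n) (Fin n) ℝ)
    (hAoff : ∀ i k, i ≠ k → At i k ≤ 0) (hDoff : ∀ l j, l ≠ j → Dt l j ≤ 0)
    (hBt : ∀ i j, 0 ≤ Bt i j) (hCt : ∀ l k, 0 ≤ Ct l k)
    (rowA : ∀ i, (∑ l, Bt i l) < ∑ k, At i k)
    (rowD : ∀ l, (∑ k, Ct l k) < ∑ j, Dt l j)
    (Φt : Matrix (Fin m) (Fin n) ℝ)
    (hP : ∀ i j, 0 ≤ Φt i j)
    (hSol : Φt * Ct * Φt - Φt * Dt - At * Φt + Bt = 0)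
    (hMin : ∀ Z : Matrix (Fin m) (Fin n) ℝ, (∀ i j, 0 ≤ Z i j) →
      Z * Ct * Z - Z * Dt - At * Z + Bt = 0 → ∀ i j, Φt i j ≤ Z i j) :
    ∀ i, (∑ j, Φt i j) ≤ 1 := by
  have hAd : ∀ i, 0 < At i i := by
    intro i
    have h1 : (∑ k, At i k) ≤ At i i := by
      rw [← Finset.add_sum_erase Finset.univ (At i) (Finset.mem_univ i)]
      have : (∑ k ∈ Finset.univ.erase i, At i k) ≤ 0 :=
        Finset.sum_nonpos fun k hk => hAoff i k (Ne.symm (Finset.ne_of_mem_erase hk))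
      linarith
    have h2 : (0:ℝ) ≤ ∑ l, Bt i l := Finset.sum_nonneg fun l _ => hBt i l
    linarith [rowA i]
  have hDd : ∀ j, 0 < Dt j j := by
    intro j
    have h1 : (∑ l, Dt j l) ≤ Dt j j := by
      rw [← Finset.add_sum_erase Finset.univ (Dt j) (Finset.mem_univ j)]
      have : (∑ l ∈ Finset.univ.erase j, Dt j l) ≤ 0 :=
        Finset.sum_nonpos fun l hl => hDoff j l (Ne.symm (Finset.ne_of_mem_erase hl))
      linarith
    have h2 : (0:ℝ) ≤ ∑ k, Ct j k := Finset.sum_nonneg fun k _ => hCt j k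
    linarith [rowD j]
  have hδ : ∀ (i : Fin m) (j : Fin n), 0 < At i i + Dt j j :=
    fun i j => add_pos (hAd i) (hDd j)
  obtain ⟨Tr, hTr⟩ : ∃ T : Matrix (Fin m) (Fin n) ℝ → Matrix (Fin m) (Fin n) ℝ,
      ∀ Y i j, T Y i j = ((∑ k, ∑ l, Y i l * Ct l k * Y k j) + Bt i j
        + (∑ k ∈ Finset.univ.erase i, (-At i k) * Y k j)
        + (∑ l ∈ Finset.univ.erase j, (-Dt l j) * Y i l)) / (At i i + Dt j j) :=
    ⟨fun Y => Matrix.of fun i j => ((∑ k, ∑ l, Y i l * Ct l k * Y k j) + Bt i j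
        + (∑ k ∈ Finset.univ.erase i, (-At i k) * Y k j)
        + (∑ l ∈ Finset.univ.erase j, (-Dt l j) * Y i l)) / (At i i + Dt j j),
      fun _ _ _ => rfl⟩
  have hnum : ∀ (Y : Matrix (Fin m) (Fin n) ℝ) i j,
      (Y * Ct * Y - Y * Dt - At * Y + Bt) i j =
      ((∑ k, ∑ l, Y i l * Ct l k * Y k j) + Bt i j
        + (∑ k ∈ Finset.univ.erase i, (-At i k) * Y k j)
        + (∑ l ∈ Finset.univ.erase j, (-Dt l j) * Y i l))
        - (At i i + Dt j j) * Y i j := by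
    intro Y i j
    have h1 : (Y * Ct * Y) i j = ∑ k, ∑ l, Y i l * Ct l k * Y k j := by
      rw [Matrix.mul_apply]
      exact Finset.sum_congr rfl fun k _ => by rw [Matrix.mul_apply, Finset.sum_mul]
    have h2 : (At * Y) i j = ∑ k, At i k * Y k j := Matrix.mul_apply
    have h3 : (Y * Dt) i j = ∑ l, Y i l * Dt l j := Matrix.mul_apply
    have e2 : (∑ k ∈ Finset.univ.erase i, (-At i k) * Y k j) =
        (∑ k, (-At i k) * Y k j) - (-At i i) * Y i j :=
      Finset.sum_erase_eq_sub (Finset.mem_univ i)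
    have e2' : (∑ k, (-At i k) * Y k j) = - ∑ k, At i k * Y k j := by
      rw [← Finset.sum_neg_distrib]
      exact Finset.sum_congr rfl fun k _ => by ring
    have e3 : (∑ l ∈ Finset.univ.erase j, (-Dt l j) * Y i l) =
        (∑ l, (-Dt l j) * Y i l) - (-Dt j j) * Y i j :=
      Finset.sum_erase_eq_sub (Finset.mem_univ j)
    have e3' : (∑ l, (-Dt l j) * Y i l) = - ∑ l, Y i l * Dt l j := by
      rw [← Finset.sum_neg_distrib]
      exact Finset.sum_congr rfl fun l _ => by ring
    simp only [Matrix.sub_apply, Matrix.add_apply, h1, h2, h3, e2, e2', e3, e3']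
    ring
  have hfix_iff : ∀ Y : Matrix (Fin m) (Fin n) ℝ,
      Tr Y = Y ↔ Y * Ct * Y - Y * Dt - At * Y + Bt = 0 := by
    intro Y
    constructor
    · intro hf
      ext i j
      have hc := congrFun (congrFun hf i) j
      rw [hTr, div_eq_iff (ne_of_gt (hδ i j))] at hc
      rw [hnum, Matrix.zero_apply]
      linarith
    · intro hs
      ext i j
      have hc := congrFun (congrFun hs i) j
      rw [hnum, Matrix.zero_apply] at hc
      rw [hTr, div_eq_iff (ne_of_gt (hδ i j))]
      linarith
  have hcoefA : ∀ (i : Fin m) k, k ∈ Finset.univ.erase i → 0 ≤ -At i k := by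
    intro i k hk
    simpa using hAoff i k (Ne.symm (Finset.ne_of_mem_erase hk))
  have hcoefD : ∀ (j : Fin n) l, l ∈ Finset.univ.erase j → 0 ≤ -Dt l j := by
    intro j l hl
    simpa using hDoff l j (Finset.ne_of_mem_erase hl)
  have hTrmono : ∀ Y Y' : Matrix (Fin m) (Fin n) ℝ, (∀ i j, 0 ≤ Y i j) →
      (∀ i j, Y i j ≤ Y' i j) → ∀ i j, Tr Y i j ≤ Tr Y' i j := by
    intro Y Y' h0 hle i j
    rw [hTr, hTr, div_le_div_iff_of_pos_right (hδ i j)]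
    have t1 : (∑ k, ∑ l, Y i l * Ct l k * Y k j) ≤ ∑ k, ∑ l, Y' i l * Ct l k * Y' k j := by
      refine Finset.sum_le_sum fun k _ => Finset.sum_le_sum fun l _ => ?_
      exact mul_le_mul (mul_le_mul_of_nonneg_right (hle i l) (hCt l k)) (hle k j)
        (h0 k j) (mul_nonneg (le_trans (h0 i l) (hle i l)) (hCt l k))
    have t2 : (∑ k ∈ Finset.univ.erase i, (-At i k) * Y k j) ≤
        ∑ k ∈ Finset.univ.erase i, (-At i k) * Y' k j :=
      Finset.sum_le_sum fun k hk => mul_le_mul_of_nonneg_left (hle k j) (hcoefA i k hk)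
    have t3 : (∑ l ∈ Finset.univ.erase j, (-Dt l j) * Y i l) ≤
        ∑ l ∈ Finset.univ.erase j, (-Dt l j) * Y' i l :=
      Finset.sum_le_sum fun l hl => mul_le_mul_of_nonneg_left (hle i l) (hcoefD j l hl)
    linarith
  have hTrnn : ∀ Y : Matrix (Fin m) (Fin n) ℝ, (∀ i j, 0 ≤ Y i j) →
      ∀ i j, 0 ≤ Tr Y i j := by
    intro Y h0 i j
    rw [hTr]
    apply div_nonneg _ (le_of_lt (hδ i j))
    have t1 : (0:ℝ) ≤ ∑ k, ∑ l, Y i l * Ct l k * Y k j :=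
      Finset.sum_nonneg fun k _ => Finset.sum_nonneg fun l _ =>
        mul_nonneg (mul_nonneg (h0 i l) (hCt l k)) (h0 k j)
    have t2 : (0:ℝ) ≤ ∑ k ∈ Finset.univ.erase i, (-At i k) * Y k j :=
      Finset.sum_nonneg fun k hk => mul_nonneg (hcoefA i k hk) (h0 k j)
    have t3 : (0:ℝ) ≤ ∑ l ∈ Finset.univ.erase j, (-Dt l j) * Y i l :=
      Finset.sum_nonneg fun l hl => mul_nonneg (hcoefD j l hl) (h0 i l)
    have t4 := hBt i j
    linarith
  have hTrΦ : Tr Φt = Φt := (hfix_iff Φt).2 hSol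
  obtain ⟨Ys, hYs0, hYss⟩ : ∃ s : ℕ → Matrix (Fin m) (Fin n) ℝ,
      s 0 = 0 ∧ ∀ k, s (k+1) = Tr (s k) :=
    ⟨fun k => Tr^[k] 0, rfl, fun k => Function.iterate_succ_apply' Tr k 0⟩
  have hYnn : ∀ k i j, 0 ≤ Ys k i j := by
    intro k
    induction k with
    | zero => intro i j; simp [hYs0]
    | succ k ih => intro i j; rw [hYss]; exact hTrnn _ ih i j
  have hYle : ∀ k i j, Ys k i j ≤ Φt i j := by
    intro k
    induction k with
    | zero => intro i j; rw [hYs0]; exact hP i j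
    | succ k ih =>
      intro i j
      rw [hYss]
      calc Tr (Ys k) i j ≤ Tr Φt i j := hTrmono _ _ (hYnn k) ih i j
        _ = Φt i j := by rw [hTrΦ]
  have hYmono : ∀ k i j, Ys k i j ≤ Ys (k+1) i j := by
    intro k
    induction k with
    | zero => intro i j; rw [hYs0, hYss, hYs0]; exact hTrnn 0 (fun _ _ => le_refl 0) i j
    | succ k ih =>
      intro i j
      rw [hYss, hYss]
      exact hTrmono _ _ (hYnn k) ih i j
  have hrowle : ∀ k i, (∑ j, Ys k i j) ≤ 1 := by
    intro k
    induction k with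
    | zero => intro i; simp [hYs0]
    | succ k ih =>
      intro i
      have hv0 : ∀ p, 0 ≤ ∑ j, Ys k p j :=
        fun p => Finset.sum_nonneg fun j _ => hYnn k p j
      have hkey : ∀ j, At i i * Ys (k+1) i j ≤
          ((∑ kk, ∑ l, Ys k i l * Ct l kk * Ys k kk j) + Bt i j
            + (∑ kk ∈ Finset.univ.erase i, (-At i kk) * Ys k kk j)
            + (∑ l ∈ Finset.univ.erase j, (-Dt l j) * Ys k i l))
            - Dt j j * Ys k i j := by
        intro j
        have he : (At i i + Dt j j) * Ys (k+1) i j =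
            ((∑ kk, ∑ l, Ys k i l * Ct l kk * Ys k kk j) + Bt i j
            + (∑ kk ∈ Finset.univ.erase i, (-At i kk) * Ys k kk j)
            + (∑ l ∈ Finset.univ.erase j, (-Dt l j) * Ys k i l)) := by
          rw [hYss, hTr, mul_comm, div_mul_cancel₀ _ (ne_of_gt (hδ i j))]
        have hm := mul_le_mul_of_nonneg_left (hYmono k i j) (le_of_lt (hDd j))
        nlinarith [he]
      have hsum := Finset.sum_le_sum (fun j (_ : j ∈ Finset.univ) => hkey j)
      rw [← Finset.mul_sum] at hsum
      -- rearrange the RHS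
      have c1 : (∑ j, ∑ kk, ∑ l, Ys k i l * Ct l kk * Ys k kk j)
          = ∑ l, Ys k i l * ∑ kk, Ct l kk * ∑ j, Ys k kk j := by
        calc (∑ j, ∑ kk, ∑ l, Ys k i l * Ct l kk * Ys k kk j)
            = ∑ kk, ∑ j, ∑ l, Ys k i l * Ct l kk * Ys k kk j := Finset.sum_comm
          _ = ∑ kk, ∑ l, ∑ j, Ys k i l * Ct l kk * Ys k kk j :=
              Finset.sum_congr rfl fun kk _ => Finset.sum_comm
          _ = ∑ kk, ∑ l, Ys k i l * Ct l kk * ∑ j, Ys k kk j := by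
              refine Finset.sum_congr rfl fun kk _ => Finset.sum_congr rfl fun l _ => ?_
              rw [Finset.mul_sum]
          _ = ∑ l, ∑ kk, Ys k i l * Ct l kk * ∑ j, Ys k kk j := Finset.sum_comm
          _ = ∑ l, Ys k i l * ∑ kk, Ct l kk * ∑ j, Ys k kk j := by
              refine Finset.sum_congr rfl fun l _ => ?_
              rw [Finset.mul_sum]
              exact Finset.sum_congr rfl fun kk _ => by ring
      have c3 : (∑ j, ∑ kk ∈ Finset.univ.erase i, (-At i kk) * Ys k kk j)
          = ∑ kk ∈ Finset.univ.erase i, (-At i kk) * ∑ j, Ys k kk j := by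
        rw [Finset.sum_comm]
        exact Finset.sum_congr rfl fun kk _ => by rw [Finset.mul_sum]
      have c4 : (∑ j, ∑ l ∈ Finset.univ.erase j, (-Dt l j) * Ys k i l)
          = (∑ l, Ys k i l * (- ∑ j, Dt l j)) + ∑ j, Dt j j * Ys k i j := by
        have hper : ∀ j : Fin n, (∑ l ∈ Finset.univ.erase j, (-Dt l j) * Ys k i l)
            = (∑ l, (-Dt l j) * Ys k i l) + Dt j j * Ys k i j := by
          intro j
          rw [Finset.sum_erase_eq_sub (Finset.mem_univ j)]
          ring
        calc (∑ j, ∑ l ∈ Finset.univ.erase j, (-Dt l j) * Ys k i l)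
            = ∑ j, ((∑ l, (-Dt l j) * Ys k i l) + Dt j j * Ys k i j) :=
              Finset.sum_congr rfl fun j _ => hper j
          _ = (∑ j, ∑ l, (-Dt l j) * Ys k i l) + ∑ j, Dt j j * Ys k i j := by
              rw [Finset.sum_add_distrib]
          _ = (∑ l, Ys k i l * (- ∑ j, Dt l j)) + ∑ j, Dt j j * Ys k i j := by
              congr 1
              rw [Finset.sum_comm]
              refine Finset.sum_congr rfl fun l _ => ?_
              rw [mul_neg, Finset.mul_sum, ← Finset.sum_neg_distrib]
              exact Finset.sum_congr rfl fun j _ => by ring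
      -- combine the quadratic and D terms, which are ≤ 0
      have hneg : (∑ l, Ys k i l * ∑ kk, Ct l kk * ∑ j, Ys k kk j)
          + (∑ l, Ys k i l * (- ∑ j, Dt l j)) ≤ 0 := by
        rw [← Finset.sum_add_distrib]
        apply Finset.sum_nonpos
        intro l _
        have hAB : (∑ kk, Ct l kk * ∑ j, Ys k kk j) - (∑ j, Dt l j) ≤ 0 := by
          have h1 : (∑ kk, Ct l kk * ∑ j, Ys k kk j) ≤ ∑ kk, Ct l kk := by
            refine Finset.sum_le_sum fun kk _ => ?_
            calc Ct l kk * ∑ j, Ys k kk j ≤ Ct l kk * 1 :=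
              mul_le_mul_of_nonneg_left (ih kk) (hCt l kk)
              _ = Ct l kk := mul_one _
          linarith [rowD l]
        have := mul_le_mul_of_nonneg_left hAB (hYnn k i l)
        calc Ys k i l * (∑ kk, Ct l kk * ∑ j, Ys k kk j) + Ys k i l * (- ∑ j, Dt l j)
            = Ys k i l * ((∑ kk, Ct l kk * ∑ j, Ys k kk j) - (∑ j, Dt l j)) := by ring
          _ ≤ Ys k i l * 0 := this
          _ = 0 := mul_zero _
      have hA3 : (∑ kk ∈ Finset.univ.erase i, (-At i kk) * ∑ j, Ys k kk j)
          ≤ At i i - ∑ kk, At i kk := by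
        have h1 : (∑ kk ∈ Finset.univ.erase i, (-At i kk) * ∑ j, Ys k kk j)
            ≤ ∑ kk ∈ Finset.univ.erase i, (-At i kk) := by
          refine Finset.sum_le_sum fun kk hk => ?_
          calc (-At i kk) * ∑ j, Ys k kk j ≤ (-At i kk) * 1 :=
            mul_le_mul_of_nonneg_left (ih kk) (hcoefA i kk hk)
            _ = -At i kk := mul_one _
        have h2 : (∑ kk ∈ Finset.univ.erase i, (-At i kk))
            = At i i - ∑ kk, At i kk := by
          rw [Finset.sum_erase_eq_sub (Finset.mem_univ i), Finset.sum_neg_distrib]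
          ring
        linarith
      -- put together
      have hRHS : (∑ j, (((∑ kk, ∑ l, Ys k i l * Ct l kk * Ys k kk j) + Bt i j
            + (∑ kk ∈ Finset.univ.erase i, (-At i kk) * Ys k kk j)
            + (∑ l ∈ Finset.univ.erase j, (-Dt l j) * Ys k i l))
            - Dt j j * Ys k i j)) ≤ At i i + (∑ j, Bt i j) - ∑ kk, At i kk := by
        have hsplit : (∑ j, (((∑ kk, ∑ l, Ys k i l * Ct l kk * Ys k kk j) + Bt i j
            + (∑ kk ∈ Finset.univ.erase i, (-At i kk) * Ys k kk j)
            + (∑ l ∈ Finset.univ.erase j, (-Dt l j) * Ys k i l))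
            - Dt j j * Ys k i j))
            = (∑ j, ∑ kk, ∑ l, Ys k i l * Ct l kk * Ys k kk j) + (∑ j, Bt i j)
            + (∑ j, ∑ kk ∈ Finset.univ.erase i, (-At i kk) * Ys k kk j)
            + (∑ j, ∑ l ∈ Finset.univ.erase j, (-Dt l j) * Ys k i l)
            - ∑ j, Dt j j * Ys k i j := by
          rw [Finset.sum_sub_distrib, Finset.sum_add_distrib, Finset.sum_add_distrib,
            Finset.sum_add_distrib]
        rw [hsplit, c1, c3, c4]
        linarith [hneg, hA3]
      have hfin : At i i * (∑ j, Ys (k+1) i j) ≤ At i i * 1 := by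
        rw [mul_one]
        have := le_trans hsum hRHS
        linarith [rowA i]
      exact le_of_mul_le_mul_left hfin (hAd i)
  -- limit of the iteration
  have hmonoij : ∀ i j, Monotone fun k => Ys k i j :=
    fun i j => monotone_nat_of_le_succ fun k => hYmono k i j
  set Yst : Matrix (Fin m) (Fin n) ℝ := Matrix.of fun i j => ⨆ k, Ys k i j with hYst
  have hYstapp : ∀ i j, Yst i j = ⨆ k, Ys k i j := fun i j => rfl
  have hbdd : ∀ i j, BddAbove (Set.range fun k => Ys k i j) := by
    intro i j
    exact ⟨Φt i j, by rintro x ⟨k, rfl⟩; exact hYle k i j⟩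
  have htend : ∀ i j, Tendsto (fun k => Ys k i j) atTop (𝓝 (Yst i j)) := by
    intro i j
    rw [hYstapp]
    exact tendsto_atTop_ciSup (hmonoij i j) (hbdd i j)
  have hstar_ge : ∀ k i j, Ys k i j ≤ Yst i j := by
    intro k i j
    rw [hYstapp]
    exact le_ciSup (hbdd i j) k
  have hstann : ∀ i j, 0 ≤ Yst i j := by
    intro i j
    have := hstar_ge 0 i j
    rw [hYs0] at this
    simpa using this
  -- Tr is continuous along the sequence
  have hTtend : ∀ i j, Tendsto (fun k => Tr (Ys k) i j) atTop (𝓝 (Tr Yst i j)) := by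
    intro i j
    simp only [hTr]
    apply Tendsto.div_const
    refine Tendsto.add (Tendsto.add (Tendsto.add ?_ tendsto_const_nhds) ?_) ?_
    · refine tendsto_finset_sum _ fun kk _ => tendsto_finset_sum _ fun l _ => ?_
      exact ((htend i l).mul_const _).mul (htend kk j)
    · exact tendsto_finset_sum _ fun kk _ => (htend kk j).const_mul _
    · exact tendsto_finset_sum _ fun l _ => (htend i l).const_mul _
  have hfixst : Tr Yst = Yst := by
    ext i j
    have t1 : Tendsto (fun k => Ys (k+1) i j) atTop (𝓝 (Yst i j)) :=
      (htend i j).comp (tendsto_add_atTop_nat 1)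
    have t2 : Tendsto (fun k => Ys (k+1) i j) atTop (𝓝 (Tr Yst i j)) := by
      have : ∀ k, Ys (k+1) i j = Tr (Ys k) i j := fun k => by rw [hYss]
      simp only [this]
      exact hTtend i j
    exact tendsto_nhds_unique t2 t1
  have hstSol := (hfix_iff Yst).1 hfixst
  have hle := hMin Yst hstann hstSol
  intro i
  have hstrow : (∑ j, Yst i j) ≤ 1 := by
    have ht : Tendsto (fun k => ∑ j, Ys k i j) atTop (𝓝 (∑ j, Yst i j)) :=
      tendsto_finset_sum _ fun j _ => htend i j
    exact le_of_tendsto ht (Eventually.of_forall fun k => hrowle k i)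
  calc (∑ j, Φt i j) ≤ ∑ j, Yst i j := Finset.sum_le_sum fun j _ => hle i j
    _ ≤ 1 := hstrow

theorem numid {m n : ℕ} {R : Type*} [CommRing R]
    (At : Matrix (Fin m) (Fin m) R) (Bt : Matrix (Fin m) (Fin n) R)
    (Ct : Matrix (Fin n) (Fin m) R) (Dt : Matrix (Fin n) (Fin n) R)
    (Y : Matrix (Fin m) (Fin n) R) (i : Fin m) (j : Fin n) :
    (Y * Ct * Y - Y * Dt - At * Y + Bt) i j =
      ((∑ k, ∑ l, Y i l * Ct l k * Y k j) + Bt i j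
        + (∑ k ∈ Finset.univ.erase i, (-At i k) * Y k j)
        + (∑ l ∈ Finset.univ.erase j, (-Dt l j) * Y i l))
        - (At i i + Dt j j) * Y i j := by
  have h1 : (Y * Ct * Y) i j = ∑ k, ∑ l, Y i l * Ct l k * Y k j := by
    rw [Matrix.mul_apply]
    exact Finset.sum_congr rfl fun k _ => by rw [Matrix.mul_apply, Finset.sum_mul]
  have h2 : (At * Y) i j = ∑ k, At i k * Y k j := Matrix.mul_apply
  have h3 : (Y * Dt) i j = ∑ l, Y i l * Dt l j := Matrix.mul_apply
  have e2 : (∑ k ∈ Finset.univ.erase i, (-At i k) * Y k j) =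
      (∑ k, (-At i k) * Y k j) - (-At i i) * Y i j :=
    Finset.sum_erase_eq_sub (Finset.mem_univ i)
  have e2' : (∑ k, (-At i k) * Y k j) = - ∑ k, At i k * Y k j := by
    rw [← Finset.sum_neg_distrib]
    exact Finset.sum_congr rfl fun k _ => by ring
  have e3 : (∑ l ∈ Finset.univ.erase j, (-Dt l j) * Y i l) =
      (∑ l, (-Dt l j) * Y i l) - (-Dt j j) * Y i j :=
    Finset.sum_erase_eq_sub (Finset.mem_univ j)
  have e3' : (∑ l, (-Dt l j) * Y i l) = - ∑ l, Y i l * Dt l j := by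
    rw [← Finset.sum_neg_distrib]
    exact Finset.sum_congr rfl fun l _ => by ring
  simp only [Matrix.sub_apply, Matrix.add_apply, h1, h2, h3, e2, e2', e3, e3']
  ring

theorem aux3 {m n : ℕ} [Nonempty (Fin m)] [Nonempty (Fin n)]
    (A : Matrix (Fin m) (Fin m) ℂ) (B : Matrix (Fin m) (Fin n) ℂ)
    (C : Matrix (Fin n) (Fin m) ℂ) (D : Matrix (Fin n) (Fin n) ℂ)
    (At : Matrix (Fin m) (Fin m) ℝ) (Bt : Matrix (Fin m) (Fin n) ℝ)
    (Ct : Matrix (Fin n) (Fin m) ℝ) (Dt : Matrix (Fin n) (Fin n) ℝ)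
    (Φt : Matrix (Fin m) (Fin n) ℝ)
    (hP : ∀ i j, 0 ≤ Φt i j)
    (hδ : ∀ i j, 0 < At i i + Dt j j)
    (cδ : ∀ i j, At i i + Dt j j ≤ ‖A i i + D j j‖)
    (cA : ∀ i k, i ≠ k → ‖A i k‖ ≤ -At i k)
    (cB : ∀ i j, ‖B i j‖ ≤ Bt i j)
    (cC : ∀ l k, ‖C l k‖ ≤ Ct l k)
    (cD : ∀ l j, l ≠ j → ‖D l j‖ ≤ -Dt l j)
    (hfixΦ : ∀ i j, (At i i + Dt j j) * Φt i j =
        (∑ k, ∑ l, Φt i l * Ct l k * Φt k j) + Bt i j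
        + (∑ k ∈ Finset.univ.erase i, (-At i k) * Φt k j)
        + (∑ l ∈ Finset.univ.erase j, (-Dt l j) * Φt i l))
    (x : Fin m → ℝ) (y : Fin n → ℝ) (hx : ∀ i, 0 < x i) (hy : ∀ j, 0 < y j)
    (hgap : ∀ i j,
        (∑ k, ∑ l, (x i * y l) * Ct l k * Φt k j)
      + (∑ k, ∑ l, Φt i l * Ct l k * (x k * y j))
      + (∑ k ∈ Finset.univ.erase i, (-At i k) * (x k * y j))
      + (∑ l ∈ Finset.univ.erase j, (-Dt l j) * (x i * y l))
      < (At i i + Dt j j) * (x i * y j)) :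
    ∃! Φ : Matrix (Fin m) (Fin n) ℂ,
      Φ * C * Φ - Φ * D - A * Φ + B = 0 ∧ ∀ i j, ‖Φ i j‖ ≤ Φt i j := by
  have hCt0 : ∀ l k, 0 ≤ Ct l k := fun l k =>
    le_trans (norm_nonneg _) (cC l k)
  have hcoefA : ∀ (i : Fin m) k, k ∈ Finset.univ.erase i → 0 ≤ -At i k := fun i k hk =>
    le_trans (norm_nonneg _) (cA i k (Ne.symm (Finset.ne_of_mem_erase hk)))
  have hcoefD : ∀ (j : Fin n) l, l ∈ Finset.univ.erase j → 0 ≤ -Dt l j := fun j l hl =>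
    le_trans (norm_nonneg _) (cD l j (Finset.ne_of_mem_erase hl))
  have hδc : ∀ (i : Fin m) (j : Fin n), (A i i + D j j) ≠ 0 := by
    intro i j h
    have := cδ i j
    rw [h] at this
    simp at this
    linarith [hδ i j]
  obtain ⟨Tc, hTc⟩ : ∃ T : Matrix (Fin m) (Fin n) ℂ → Matrix (Fin m) (Fin n) ℂ,
      ∀ X i j, T X i j = ((∑ k, ∑ l, X i l * C l k * X k j) + B i j
        + (∑ k ∈ Finset.univ.erase i, (-A i k) * X k j)
        + (∑ l ∈ Finset.univ.erase j, (-D l j) * X i l)) / (A i i + D j j) :=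
    ⟨fun X => Matrix.of fun i j => ((∑ k, ∑ l, X i l * C l k * X k j) + B i j
        + (∑ k ∈ Finset.univ.erase i, (-A i k) * X k j)
        + (∑ l ∈ Finset.univ.erase j, (-D l j) * X i l)) / (A i i + D j j),
      fun _ _ _ => rfl⟩
  have hfix_iff : ∀ X : Matrix (Fin m) (Fin n) ℂ,
      Tc X = X ↔ X * C * X - X * D - A * X + B = 0 := by
    intro X
    constructor
    · intro hf
      ext i j
      have hc := congrFun (congrFun hf i) j
      rw [hTc, div_eq_iff (hδc i j)] at hc
      rw [Matrix.zero_apply, numid, hc]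
      ring
    · intro hs
      ext i j
      have hc := congrFun (congrFun hs i) j
      rw [numid, Matrix.zero_apply] at hc
      rw [hTc, div_eq_iff (hδc i j)]
      rw [sub_eq_zero] at hc
      rw [hc]
      ring
  -- invariance of the ball |X| ≤ Φt
  have habs3 : ∀ (X : Matrix (Fin m) (Fin n) ℂ), (∀ i j, ‖X i j‖ ≤ Φt i j) →
      ∀ (i : Fin m) (j : Fin n) k, k ∈ Finset.univ.erase i →
      ‖(-A i k) * X k j‖ ≤ (-At i k) * Φt k j := by
    intro X hX i j k hk
    rw [norm_mul, norm_neg]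
    exact mul_le_mul (cA i k (Ne.symm (Finset.ne_of_mem_erase hk))) (hX k j)
      (norm_nonneg _) (hcoefA i k hk)
  have habs4 : ∀ (X : Matrix (Fin m) (Fin n) ℂ), (∀ i j, ‖X i j‖ ≤ Φt i j) →
      ∀ (i : Fin m) (j : Fin n) l, l ∈ Finset.univ.erase j →
      ‖(-D l j) * X i l‖ ≤ (-Dt l j) * Φt i l := by
    intro X hX i j l hl
    rw [norm_mul, norm_neg]
    exact mul_le_mul (cD l j (Finset.ne_of_mem_erase hl)) (hX i l)
      (norm_nonneg _) (hcoefD j l hl)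
  have hInv : ∀ X : Matrix (Fin m) (Fin n) ℂ, (∀ i j, ‖X i j‖ ≤ Φt i j) →
      ∀ i j, ‖Tc X i j‖ ≤ Φt i j := by
    intro X hX i j
    rw [hTc, norm_div]
    have hnumb : ‖(∑ k, ∑ l, X i l * C l k * X k j) + B i j
        + (∑ k ∈ Finset.univ.erase i, (-A i k) * X k j)
        + (∑ l ∈ Finset.univ.erase j, (-D l j) * X i l)‖
        ≤ (At i i + Dt j j) * Φt i j := by
      rw [hfixΦ i j]
      have b1 : ‖∑ k, ∑ l, X i l * C l k * X k j‖
          ≤ ∑ k, ∑ l, Φt i l * Ct l k * Φt k j := by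
        refine le_trans (norm_sum_le _ _) (Finset.sum_le_sum fun k _ => ?_)
        refine le_trans (norm_sum_le _ _) (Finset.sum_le_sum fun l _ => ?_)
        rw [norm_mul, norm_mul]
        exact mul_le_mul (mul_le_mul (hX i l) (cC l k) (norm_nonneg _) (hP i l))
          (hX k j) (norm_nonneg _) (mul_nonneg (hP i l) (hCt0 l k))
      have b3 : ‖∑ k ∈ Finset.univ.erase i, (-A i k) * X k j‖
          ≤ ∑ k ∈ Finset.univ.erase i, (-At i k) * Φt k j :=
        le_trans (norm_sum_le _ _)
          (Finset.sum_le_sum fun k hk => habs3 X hX i j k hk)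
      have b4 : ‖∑ l ∈ Finset.univ.erase j, (-D l j) * X i l‖
          ≤ ∑ l ∈ Finset.univ.erase j, (-Dt l j) * Φt i l :=
        le_trans (norm_sum_le _ _)
          (Finset.sum_le_sum fun l hl => habs4 X hX i j l hl)
      have btri := norm_add_le ((∑ k, ∑ l, X i l * C l k * X k j) + B i j
        + (∑ k ∈ Finset.univ.erase i, (-A i k) * X k j))
        (∑ l ∈ Finset.univ.erase j, (-D l j) * X i l)
      have btri2 := norm_add_le ((∑ k, ∑ l, X i l * C l k * X k j) + B i j)
        (∑ k ∈ Finset.univ.erase i, (-A i k) * X k j)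
      have btri3 := norm_add_le (∑ k, ∑ l, X i l * C l k * X k j) (B i j)
      have := cB i j
      linarith
    calc ‖(∑ k, ∑ l, X i l * C l k * X k j) + B i j
        + (∑ k ∈ Finset.univ.erase i, (-A i k) * X k j)
        + (∑ l ∈ Finset.univ.erase j, (-D l j) * X i l)‖ / ‖A i i + D j j‖
        ≤ ((At i i + Dt j j) * Φt i j) / (At i i + Dt j j) :=
          div_le_div₀ (mul_nonneg (le_of_lt (hδ i j)) (hP i j)) hnumb (hδ i j) (cδ i j)
      _ = Φt i j := mul_div_cancel_left₀ _ (ne_of_gt (hδ i j))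
  -- key contraction estimate
  have hKey : ∀ X Y : Matrix (Fin m) (Fin n) ℂ,
      (∀ i j, ‖X i j‖ ≤ Φt i j) → (∀ i j, ‖Y i j‖ ≤ Φt i j) →
      ∀ i j, ‖Tc X i j - Tc Y i j‖ ≤
        ((∑ k, ∑ l, ‖X i l - Y i l‖ * Ct l k * Φt k j)
        + (∑ k, ∑ l, Φt i l * Ct l k * ‖X k j - Y k j‖)
        + (∑ k ∈ Finset.univ.erase i, (-At i k) * ‖X k j - Y k j‖)
        + (∑ l ∈ Finset.univ.erase j, (-Dt l j) * ‖X i l - Y i l‖))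
        / (At i i + Dt j j) := by
    intro X Y hX hY i j
    have hdiffeq : Tc X i j - Tc Y i j =
        ((∑ k, ∑ l, ((X i l - Y i l) * C l k * X k j + Y i l * C l k * (X k j - Y k j)))
        + (∑ k ∈ Finset.univ.erase i, (-A i k) * (X k j - Y k j))
        + (∑ l ∈ Finset.univ.erase j, (-D l j) * (X i l - Y i l))) / (A i i + D j j) := by
      rw [hTc, hTc, div_sub_div_same]
      congr 1
      have r1 : (∑ k, ∑ l, ((X i l - Y i l) * C l k * X k j + Y i l * C l k * (X k j - Y k j)))
          = (∑ k, ∑ l, X i l * C l k * X k j) - (∑ k, ∑ l, Y i l * C l k * Y k j) := by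
        rw [← Finset.sum_sub_distrib]
        refine Finset.sum_congr rfl fun k _ => ?_
        rw [← Finset.sum_sub_distrib]
        exact Finset.sum_congr rfl fun l _ => by ring
      have r3 : (∑ k ∈ Finset.univ.erase i, (-A i k) * (X k j - Y k j))
          = (∑ k ∈ Finset.univ.erase i, (-A i k) * X k j)
            - ∑ k ∈ Finset.univ.erase i, (-A i k) * Y k j := by
        rw [← Finset.sum_sub_distrib]
        exact Finset.sum_congr rfl fun k _ => by ring
      have r4 : (∑ l ∈ Finset.univ.erase j, (-D l j) * (X i l - Y i l))
          = (∑ l ∈ Finset.univ.erase j, (-D l j) * X i l)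
            - ∑ l ∈ Finset.univ.erase j, (-D l j) * Y i l := by
        rw [← Finset.sum_sub_distrib]
        exact Finset.sum_congr rfl fun l _ => by ring
      rw [r1, r3, r4]
      ring
    rw [hdiffeq, norm_div]
    have hnumnn : (0:ℝ) ≤ (∑ k, ∑ l, ‖X i l - Y i l‖ * Ct l k * Φt k j)
        + (∑ k, ∑ l, Φt i l * Ct l k * ‖X k j - Y k j‖)
        + (∑ k ∈ Finset.univ.erase i, (-At i k) * ‖X k j - Y k j‖)
        + (∑ l ∈ Finset.univ.erase j, (-Dt l j) * ‖X i l - Y i l‖) := by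
      have s1 : (0:ℝ) ≤ ∑ k, ∑ l, ‖X i l - Y i l‖ * Ct l k * Φt k j :=
        Finset.sum_nonneg fun k _ => Finset.sum_nonneg fun l _ =>
          mul_nonneg (mul_nonneg (norm_nonneg _) (hCt0 l k)) (hP k j)
      have s2 : (0:ℝ) ≤ ∑ k, ∑ l, Φt i l * Ct l k * ‖X k j - Y k j‖ :=
        Finset.sum_nonneg fun k _ => Finset.sum_nonneg fun l _ =>
          mul_nonneg (mul_nonneg (hP i l) (hCt0 l k)) (norm_nonneg _)
      have s3 : (0:ℝ) ≤ ∑ k ∈ Finset.univ.erase i, (-At i k) * ‖X k j - Y k j‖ :=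
        Finset.sum_nonneg fun k hk => mul_nonneg (hcoefA i k hk) (norm_nonneg _)
      have s4 : (0:ℝ) ≤ ∑ l ∈ Finset.univ.erase j, (-Dt l j) * ‖X i l - Y i l‖ :=
        Finset.sum_nonneg fun l hl => mul_nonneg (hcoefD j l hl) (norm_nonneg _)
      linarith
    refine div_le_div₀ hnumnn ?_ (hδ i j) (cδ i j)
    -- numerator bound
    have b1 : ‖∑ k, ∑ l, ((X i l - Y i l) * C l k * X k j
        + Y i l * C l k * (X k j - Y k j))‖
        ≤ (∑ k, ∑ l, ‖X i l - Y i l‖ * Ct l k * Φt k j)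
        + (∑ k, ∑ l, Φt i l * Ct l k * ‖X k j - Y k j‖) := by
      rw [← Finset.sum_add_distrib]
      refine le_trans (norm_sum_le _ _) (Finset.sum_le_sum fun k _ => ?_)
      rw [← Finset.sum_add_distrib]
      refine le_trans (norm_sum_le _ _) (Finset.sum_le_sum fun l _ => ?_)
      refine le_trans (norm_add_le _ _) ?_
      have p1 : ‖(X i l - Y i l) * C l k * X k j‖
          ≤ ‖X i l - Y i l‖ * Ct l k * Φt k j := by
        rw [norm_mul, norm_mul]
        exact mul_le_mul (mul_le_mul (le_refl _) (cC l k) (norm_nonneg _)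
          (norm_nonneg _)) (hX k j) (norm_nonneg _)
          (mul_nonneg (norm_nonneg _) (hCt0 l k))
      have p2 : ‖Y i l * C l k * (X k j - Y k j)‖
          ≤ Φt i l * Ct l k * ‖X k j - Y k j‖ := by
        rw [norm_mul, norm_mul]
        exact mul_le_mul (mul_le_mul (hY i l) (cC l k) (norm_nonneg _) (hP i l))
          (le_refl _) (norm_nonneg _) (mul_nonneg (hP i l) (hCt0 l k))
      linarith
    have b3 : ‖∑ k ∈ Finset.univ.erase i, (-A i k) * (X k j - Y k j)‖
        ≤ ∑ k ∈ Finset.univ.erase i, (-At i k) * ‖X k j - Y k j‖ := by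
      refine le_trans (norm_sum_le _ _) (Finset.sum_le_sum fun k hk => ?_)
      rw [norm_mul, norm_neg]
      exact mul_le_mul_of_nonneg_right (cA i k (Ne.symm (Finset.ne_of_mem_erase hk)))
        (norm_nonneg _)
    have b4 : ‖∑ l ∈ Finset.univ.erase j, (-D l j) * (X i l - Y i l)‖
        ≤ ∑ l ∈ Finset.univ.erase j, (-Dt l j) * ‖X i l - Y i l‖ := by
      refine le_trans (norm_sum_le _ _) (Finset.sum_le_sum fun l hl => ?_)
      rw [norm_mul, norm_neg]
      exact mul_le_mul_of_nonneg_right (cD l j (Finset.ne_of_mem_erase hl))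
        (norm_nonneg _)
    have btri := norm_add_le ((∑ k, ∑ l, ((X i l - Y i l) * C l k * X k j
        + Y i l * C l k * (X k j - Y k j)))
        + (∑ k ∈ Finset.univ.erase i, (-A i k) * (X k j - Y k j)))
        (∑ l ∈ Finset.univ.erase j, (-D l j) * (X i l - Y i l))
    have btri2 := norm_add_le (∑ k, ∑ l, ((X i l - Y i l) * C l k * X k j
        + Y i l * C l k * (X k j - Y k j)))
        (∑ k ∈ Finset.univ.erase i, (-A i k) * (X k j - Y k j))
    linarith
  -- the weight and contraction factor
  have hwpos : ∀ (i : Fin m) (j : Fin n), 0 < x i * y j := fun i j => mul_pos (hx i) (hy j)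
  have hδwpos : ∀ (i : Fin m) (j : Fin n), 0 < (At i i + Dt j j) * (x i * y j) :=
    fun i j => mul_pos (hδ i j) (hwpos i j)
  obtain ⟨LW, hLW⟩ : ∃ f : Fin m → Fin n → ℝ, ∀ i j, f i j =
      (∑ k, ∑ l, (x i * y l) * Ct l k * Φt k j)
      + (∑ k, ∑ l, Φt i l * Ct l k * (x k * y j))
      + (∑ k ∈ Finset.univ.erase i, (-At i k) * (x k * y j))
      + (∑ l ∈ Finset.univ.erase j, (-Dt l j) * (x i * y l)) :=
    ⟨fun i j => (∑ k, ∑ l, (x i * y l) * Ct l k * Φt k j)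
      + (∑ k, ∑ l, Φt i l * Ct l k * (x k * y j))
      + (∑ k ∈ Finset.univ.erase i, (-At i k) * (x k * y j))
      + (∑ l ∈ Finset.univ.erase j, (-Dt l j) * (x i * y l)), fun _ _ => rfl⟩
  have hLWnn : ∀ i j, 0 ≤ LW i j := by
    intro i j
    rw [hLW]
    have s1 : (0:ℝ) ≤ ∑ k, ∑ l, (x i * y l) * Ct l k * Φt k j :=
      Finset.sum_nonneg fun k _ => Finset.sum_nonneg fun l _ =>
        mul_nonneg (mul_nonneg (le_of_lt (hwpos i l)) (hCt0 l k)) (hP k j)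
    have s2 : (0:ℝ) ≤ ∑ k, ∑ l, Φt i l * Ct l k * (x k * y j) :=
      Finset.sum_nonneg fun k _ => Finset.sum_nonneg fun l _ =>
        mul_nonneg (mul_nonneg (hP i l) (hCt0 l k)) (le_of_lt (hwpos k j))
    have s3 : (0:ℝ) ≤ ∑ k ∈ Finset.univ.erase i, (-At i k) * (x k * y j) :=
      Finset.sum_nonneg fun k hk => mul_nonneg (hcoefA i k hk) (le_of_lt (hwpos k j))
    have s4 : (0:ℝ) ≤ ∑ l ∈ Finset.univ.erase j, (-Dt l j) * (x i * y l) :=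
      Finset.sum_nonneg fun l hl => mul_nonneg (hcoefD j l hl) (le_of_lt (hwpos i l))
    linarith
  have hpairs : (Finset.univ : Finset (Fin m × Fin n)).Nonempty := Finset.univ_nonempty
  set θ := Finset.univ.sup' hpairs
    (fun p : Fin m × Fin n => LW p.1 p.2 / ((At p.1 p.1 + Dt p.2 p.2) * (x p.1 * y p.2)))
    with hθdef
  have hθ1 : θ < 1 := by
    rw [hθdef, Finset.sup'_lt_iff]
    intro p _
    rw [div_lt_one (hδwpos p.1 p.2)]
    calc LW p.1 p.2 = _ := hLW p.1 p.2
      _ < _ := hgap p.1 p.2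
  have hθ0 : 0 ≤ θ := by
    have h0 := Finset.le_sup'
      (fun p : Fin m × Fin n => LW p.1 p.2 / ((At p.1 p.1 + Dt p.2 p.2) * (x p.1 * y p.2)))
      (Finset.mem_univ (Classical.arbitrary (Fin m × Fin n)))
    refine le_trans ?_ h0
    exact div_nonneg (hLWnn _ _) (le_of_lt (hδwpos _ _))
  have hθle : ∀ i j, LW i j ≤ θ * ((At i i + Dt j j) * (x i * y j)) := by
    intro i j
    have h0 := Finset.le_sup'
      (fun p : Fin m × Fin n => LW p.1 p.2 / ((At p.1 p.1 + Dt p.2 p.2) * (x p.1 * y p.2)))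
      (Finset.mem_univ ((i, j) : Fin m × Fin n))
    rw [div_le_iff₀ (hδwpos i j)] at h0
    calc LW i j ≤ _ := h0
      _ = θ * ((At i i + Dt j j) * (x i * y j)) := by ring
  -- the contraction step
  have hstep : ∀ X Y : Matrix (Fin m) (Fin n) ℂ,
      (∀ i j, ‖X i j‖ ≤ Φt i j) → (∀ i j, ‖Y i j‖ ≤ Φt i j) →
      ∀ t : ℝ, 0 ≤ t → (∀ i j, ‖X i j - Y i j‖ ≤ t * (x i * y j)) →
      ∀ i j, ‖Tc X i j - Tc Y i j‖ ≤ (θ * t) * (x i * y j) := by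
    intro X Y hX hY t ht hE i j
    refine le_trans (hKey X Y hX hY i j) ?_
    rw [div_le_iff₀ (hδ i j)]
    have s1 : (∑ k, ∑ l, ‖X i l - Y i l‖ * Ct l k * Φt k j)
        ≤ t * ∑ k, ∑ l, (x i * y l) * Ct l k * Φt k j := by
      rw [Finset.mul_sum]
      refine Finset.sum_le_sum fun k _ => ?_
      rw [Finset.mul_sum]
      refine Finset.sum_le_sum fun l _ => ?_
      calc ‖X i l - Y i l‖ * Ct l k * Φt k j
          ≤ (t * (x i * y l)) * Ct l k * Φt k j :=
            mul_le_mul_of_nonneg_right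
              (mul_le_mul_of_nonneg_right (hE i l) (hCt0 l k)) (hP k j)
        _ = t * ((x i * y l) * Ct l k * Φt k j) := by ring
    have s2 : (∑ k, ∑ l, Φt i l * Ct l k * ‖X k j - Y k j‖)
        ≤ t * ∑ k, ∑ l, Φt i l * Ct l k * (x k * y j) := by
      rw [Finset.mul_sum]
      refine Finset.sum_le_sum fun k _ => ?_
      rw [Finset.mul_sum]
      refine Finset.sum_le_sum fun l _ => ?_
      calc Φt i l * Ct l k * ‖X k j - Y k j‖
          ≤ Φt i l * Ct l k * (t * (x k * y j)) :=
            mul_le_mul_of_nonneg_left (hE k j) (mul_nonneg (hP i l) (hCt0 l k))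
        _ = t * (Φt i l * Ct l k * (x k * y j)) := by ring
    have s3 : (∑ k ∈ Finset.univ.erase i, (-At i k) * ‖X k j - Y k j‖)
        ≤ t * ∑ k ∈ Finset.univ.erase i, (-At i k) * (x k * y j) := by
      rw [Finset.mul_sum]
      refine Finset.sum_le_sum fun k hk => ?_
      calc (-At i k) * ‖X k j - Y k j‖ ≤ (-At i k) * (t * (x k * y j)) :=
          mul_le_mul_of_nonneg_left (hE k j) (hcoefA i k hk)
        _ = t * ((-At i k) * (x k * y j)) := by ring
    have s4 : (∑ l ∈ Finset.univ.erase j, (-Dt l j) * ‖X i l - Y i l‖)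
        ≤ t * ∑ l ∈ Finset.univ.erase j, (-Dt l j) * (x i * y l) := by
      rw [Finset.mul_sum]
      refine Finset.sum_le_sum fun l hl => ?_
      calc (-Dt l j) * ‖X i l - Y i l‖ ≤ (-Dt l j) * (t * (x i * y l)) :=
          mul_le_mul_of_nonneg_left (hE i l) (hcoefD j l hl)
        _ = t * ((-Dt l j) * (x i * y l)) := by ring
    have hcomb : (∑ k, ∑ l, ‖X i l - Y i l‖ * Ct l k * Φt k j)
        + (∑ k, ∑ l, Φt i l * Ct l k * ‖X k j - Y k j‖)
        + (∑ k ∈ Finset.univ.erase i, (-At i k) * ‖X k j - Y k j‖)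
        + (∑ l ∈ Finset.univ.erase j, (-Dt l j) * ‖X i l - Y i l‖)
        ≤ t * LW i j := by
      rw [hLW]
      linarith
    have hLWθ := hθle i j
    have : t * LW i j ≤ t * (θ * ((At i i + Dt j j) * (x i * y j))) :=
      mul_le_mul_of_nonneg_left hLWθ ht
    calc (∑ k, ∑ l, ‖X i l - Y i l‖ * Ct l k * Φt k j)
        + (∑ k, ∑ l, Φt i l * Ct l k * ‖X k j - Y k j‖)
        + (∑ k ∈ Finset.univ.erase i, (-At i k) * ‖X k j - Y k j‖)
        + (∑ l ∈ Finset.univ.erase j, (-Dt l j) * ‖X i l - Y i l‖)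
        ≤ t * (θ * ((At i i + Dt j j) * (x i * y j))) := le_trans hcomb this
      _ = θ * t * (x i * y j) * (At i i + Dt j j) := by ring
  -- iterate from 0
  obtain ⟨Zs, hZs0, hZss⟩ : ∃ s : ℕ → Matrix (Fin m) (Fin n) ℂ,
      s 0 = 0 ∧ ∀ k, s (k+1) = Tc (s k) :=
    ⟨fun k => Tc^[k] 0, rfl, fun k => Function.iterate_succ_apply' Tc k 0⟩
  have hZS : ∀ k i j, ‖Zs k i j‖ ≤ Φt i j := by
    intro k
    induction k with
    | zero => intro i j; simp [hZs0]; exact hP i j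
    | succ k ih => intro i j; rw [hZss]; exact hInv _ ih i j
  set c0 := Finset.univ.sup' hpairs
    (fun p : Fin m × Fin n => Φt p.1 p.2 / (x p.1 * y p.2)) with hc0def
  have hc00 : 0 ≤ c0 := by
    refine le_trans ?_ (Finset.le_sup'
      (fun p : Fin m × Fin n => Φt p.1 p.2 / (x p.1 * y p.2))
      (Finset.mem_univ (Classical.arbitrary (Fin m × Fin n))))
    exact div_nonneg (hP _ _) (le_of_lt (hwpos _ _))
  have hc0 : ∀ i j, Φt i j ≤ c0 * (x i * y j) := by
    intro i j
    have h0 := Finset.le_sup'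
      (fun p : Fin m × Fin n => Φt p.1 p.2 / (x p.1 * y p.2))
      (Finset.mem_univ ((i, j) : Fin m × Fin n))
    rw [div_le_iff₀ (hwpos i j)] at h0
    calc Φt i j ≤ _ := h0
      _ = c0 * (x i * y j) := by ring
  have hgeo : ∀ k i j, ‖Zs (k+1) i j - Zs k i j‖ ≤ (c0 * θ^k) * (x i * y j) := by
    intro k
    induction k with
    | zero =>
      intro i j
      rw [hZs0]
      simp only [Matrix.zero_apply, sub_zero, pow_zero, mul_one]
      exact le_trans (hZS 1 i j) (hc0 i j)
    | succ k ih =>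
      intro i j
      have := hstep (Zs (k+1)) (Zs k) (hZS (k+1)) (hZS k) (c0 * θ^k)
        (mul_nonneg hc00 (pow_nonneg hθ0 k)) ih i j
      rw [← hZss (k+1), ← hZss k] at this
      calc ‖Zs (k+1+1) i j - Zs (k+1) i j‖
          ≤ (θ * (c0 * θ^k)) * (x i * y j) := this
        _ = (c0 * θ^(k+1)) * (x i * y j) := by ring
  have hcauchy : ∀ i j, CauchySeq (fun k => Zs k i j) := by
    intro i j
    apply cauchySeq_of_le_geometric θ (c0 * (x i * y j)) hθ1
    intro k
    rw [Complex.dist_eq, norm_sub_rev]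
    calc ‖Zs (k+1) i j - Zs k i j‖ ≤ (c0 * θ^k) * (x i * y j) := hgeo k i j
      _ = c0 * (x i * y j) * θ^k := by ring
  have hex : ∀ i j, ∃ L : ℂ, Tendsto (fun k => Zs k i j) atTop (𝓝 L) :=
    fun i j => cauchySeq_tendsto_of_complete (hcauchy i j)
  choose Φl0 hΦl0 using hex
  obtain ⟨Φl, hΦl⟩ : ∃ M : Matrix (Fin m) (Fin n) ℂ,
      ∀ i j, Tendsto (fun k => Zs k i j) atTop (𝓝 (M i j)) :=
    ⟨Matrix.of fun i j => Φl0 i j, fun i j => hΦl0 i j⟩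
  have hSl : ∀ i j, ‖Φl i j‖ ≤ Φt i j := by
    intro i j
    have habs : Tendsto (fun k => ‖Zs k i j‖) atTop (𝓝 (‖Φl i j‖)) :=
      (continuous_norm.tendsto _).comp (hΦl i j)
    exact le_of_tendsto habs (Eventually.of_forall fun k => hZS k i j)
  have hfixl : Tc Φl = Φl := by
    ext i j
    have t1 : Tendsto (fun k => Zs (k+1) i j) atTop (𝓝 (Φl i j)) :=
      (hΦl i j).comp (tendsto_add_atTop_nat 1)
    have t2 : Tendsto (fun k => Tc (Zs k) i j) atTop (𝓝 (Tc Φl i j)) := by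
      simp only [hTc]
      apply Tendsto.div_const
      refine Tendsto.add (Tendsto.add (Tendsto.add ?_ tendsto_const_nhds) ?_) ?_
      · refine tendsto_finset_sum _ fun kk _ => tendsto_finset_sum _ fun l _ => ?_
        exact ((hΦl i l).mul_const _).mul (hΦl kk j)
      · exact tendsto_finset_sum _ fun kk _ => (hΦl kk j).const_mul _
      · exact tendsto_finset_sum _ fun l _ => (hΦl i l).const_mul _
    have t3 : Tendsto (fun k => Zs (k+1) i j) atTop (𝓝 (Tc Φl i j)) := by
      have : ∀ k, Zs (k+1) i j = Tc (Zs k) i j := fun k => by rw [hZss]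
      simp only [this]
      exact t2
    exact tendsto_nhds_unique t3 t1
  have hSoll : Φl * C * Φl - Φl * D - A * Φl + B = 0 := (hfix_iff Φl).1 hfixl
  refine ⟨Φl, ⟨hSoll, hSl⟩, ?_⟩
  rintro Ψ ⟨hΨsol, hΨS⟩
  have hfixΨ : Tc Ψ = Ψ := (hfix_iff Ψ).2 hΨsol
  set ts := Finset.univ.sup' hpairs
    (fun p : Fin m × Fin n => ‖Ψ p.1 p.2 - Φl p.1 p.2‖ / (x p.1 * y p.2))
    with htsdef
  have hts0 : 0 ≤ ts := by
    refine le_trans ?_ (Finset.le_sup'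
      (fun p : Fin m × Fin n => ‖Ψ p.1 p.2 - Φl p.1 p.2‖ / (x p.1 * y p.2))
      (Finset.mem_univ (Classical.arbitrary (Fin m × Fin n))))
    exact div_nonneg (norm_nonneg _) (le_of_lt (hwpos _ _))
  have htsle : ∀ i j, ‖Ψ i j - Φl i j‖ ≤ ts * (x i * y j) := by
    intro i j
    have h0 := Finset.le_sup'
      (fun p : Fin m × Fin n => ‖Ψ p.1 p.2 - Φl p.1 p.2‖ / (x p.1 * y p.2))
      (Finset.mem_univ ((i, j) : Fin m × Fin n))
    rw [div_le_iff₀ (hwpos i j)] at h0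
    calc ‖Ψ i j - Φl i j‖ ≤ _ := h0
      _ = ts * (x i * y j) := by ring
  have hcontra := hstep Ψ Φl hΨS hSl ts hts0 htsle
  have hafter : ∀ i j, ‖Ψ i j - Φl i j‖ ≤ (θ * ts) * (x i * y j) := by
    intro i j
    have := hcontra i j
    rwa [hfixΨ, hfixl] at this
  have htsθ : ts ≤ θ * ts := by
    rw [htsdef]
    apply Finset.sup'_le
    intro p _
    rw [div_le_iff₀ (hwpos p.1 p.2)]
    exact hafter p.1 p.2
  have htsz : ts ≤ 0 := by
    by_contra hpos
    push_neg at hpos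
    have : θ * ts < 1 * ts := mul_lt_mul_of_pos_right hθ1 hpos
    rw [one_mul] at this
    linarith
  ext i j
  have h1 : ‖Ψ i j - Φl i j‖ ≤ 0 := by
    refine le_trans (htsle i j) ?_
    exact mul_nonpos_of_nonpos_of_nonneg htsz (le_of_lt (hwpos i j))
  have h2 : ‖Ψ i j - Φl i j‖ = 0 :=
    le_antisymm h1 (norm_nonneg _)
  have := norm_eq_zero.1 h2
  exact sub_eq_zero.1 this



/-- Existence and uniqueness of the solution `Φ` of the NARE
`XCX − XD − AX + B = 0` with `|Φ| ≤ Φ̃`, where `Φ̃` is the minimal nonnegative solution of the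
dominating real M-matrix NARE. -/
theorem stmt3 {m n : ℕ} (ω : ℝ) (hω : ω ∈ Set.Icc (0 : ℝ) 1)
    (A : Matrix (Fin m) (Fin m) ℂ) (B : Matrix (Fin m) (Fin n) ℂ)
    (C : Matrix (Fin n) (Fin m) ℂ) (D : Matrix (Fin n) (Fin n) ℂ)
    (At : Matrix (Fin m) (Fin m) ℝ) (Bt : Matrix (Fin m) (Fin n) ℝ)
    (Ct : Matrix (Fin n) (Fin m) ℝ) (Dt : Matrix (Fin n) (Fin n) ℝ)
    (hQ : IsNonsingMMatrix (omegaComp ω (Matrix.fromBlocks D (-C) (-B) A)))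
    (hQ1 : ∀ i, 0 < ((omegaComp ω (Matrix.fromBlocks D (-C) (-B) A)) *ᵥ 1) i)
    (hQt : IsNonsingMMatrix (Matrix.fromBlocks Dt (-Ct) (-Bt) At))
    (hQtle : ∀ i j, Matrix.fromBlocks Dt (-Ct) (-Bt) At i j ≤
      omegaComp ω (Matrix.fromBlocks D (-C) (-B) A) i j)
    (hQt1 : ∀ i, 0 < ((Matrix.fromBlocks Dt (-Ct) (-Bt) At) *ᵥ 1) i)
    (Φt : Matrix (Fin m) (Fin n) ℝ)
    (hΦtPos : ∀ i j, 0 ≤ Φt i j)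
    (hΦtSol : Φt * Ct * Φt - Φt * Dt - At * Φt + Bt = 0)
    (hΦtMin : ∀ Z : Matrix (Fin m) (Fin n) ℝ, (∀ i j, 0 ≤ Z i j) →
      Z * Ct * Z - Z * Dt - At * Z + Bt = 0 → ∀ i j, Φt i j ≤ Z i j) :
    ∃! Φ : Matrix (Fin m) (Fin n) ℂ,
      Φ * C * Φ - Φ * D - A * Φ + B = 0 ∧ ∀ i j, ‖Φ i j‖ ≤ Φt i j := by
  -- degenerate cases
  cases isEmpty_or_nonempty (Fin m) with
  | inl hem =>
    haveI : Subsingleton (Matrix (Fin m) (Fin n) ℂ) :=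
      ⟨fun a b => funext fun i => isEmptyElim i⟩
    exact ⟨0, ⟨Subsingleton.elim _ _, fun i j => isEmptyElim i⟩,
      fun Ψ _ => Subsingleton.elim _ _⟩
  | inr hm =>
  cases isEmpty_or_nonempty (Fin n) with
  | inl hen =>
    haveI : Subsingleton (Matrix (Fin m) (Fin n) ℂ) :=
      ⟨fun a b => funext fun i => funext fun j => isEmptyElim j⟩
    exact ⟨0, ⟨Subsingleton.elim _ _, fun i j => isEmptyElim j⟩,
      fun Ψ _ => Subsingleton.elim _ _⟩
  | inr hn =>
  -- sign and row facts from the M-matrix hypotheses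
  have hAoff : ∀ i k, i ≠ k → At i k ≤ 0 := by
    intro i k hik
    have := hQt.1 (Sum.inr i) (Sum.inr k) (by simp [hik])
    simpa using this
  have hDoff : ∀ l j, l ≠ j → Dt l j ≤ 0 := by
    intro l j hlj
    have := hQt.1 (Sum.inl l) (Sum.inl j) (by simp [hlj])
    simpa using this
  have hBt : ∀ i j, 0 ≤ Bt i j := by
    intro i j
    have := hQt.1 (Sum.inr i) (Sum.inl j) (by simp)
    simpa using this
  have hCt : ∀ l k, 0 ≤ Ct l k := by
    intro l k
    have := hQt.1 (Sum.inl l) (Sum.inr k) (by simp)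
    simpa using this
  have hrowA : ∀ i, (∑ l, Bt i l) < ∑ k, At i k := by
    intro i
    have := hQt1 (Sum.inr i)
    simp [Matrix.mulVec, dotProduct, Fintype.sum_sum_type,
      Finset.sum_neg_distrib] at this
    linarith
  have hrowD : ∀ l, (∑ k, Ct l k) < ∑ j, Dt l j := by
    intro l
    have := hQt1 (Sum.inl l)
    simp [Matrix.mulVec, dotProduct, Fintype.sum_sum_type,
      Finset.sum_neg_distrib] at this
    linarith
  -- comparison facts from hQtle
  have cA : ∀ i k, i ≠ k → ‖A i k‖ ≤ -At i k := by
    intro i k hik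
    have := hQtle (Sum.inr i) (Sum.inr k)
    simp [omegaComp, hik] at this
    linarith
  have cD : ∀ l j, l ≠ j → ‖D l j‖ ≤ -Dt l j := by
    intro l j hlj
    have := hQtle (Sum.inl l) (Sum.inl j)
    simp [omegaComp, hlj] at this
    linarith
  have cB : ∀ i j, ‖B i j‖ ≤ Bt i j := by
    intro i j
    have := hQtle (Sum.inr i) (Sum.inl j)
    simp [omegaComp] at this
    linarith
  have cC : ∀ l k, ‖C l k‖ ≤ Ct l k := by
    intro l k
    have := hQtle (Sum.inl l) (Sum.inr k)
    simp [omegaComp] at this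
    linarith
  have cAd : ∀ i, At i i ≤ wlin ω (A i i) := by
    intro i
    have := hQtle (Sum.inr i) (Sum.inr i)
    simpa [omegaComp] using this
  have cDd : ∀ j, Dt j j ≤ wlin ω (D j j) := by
    intro j
    have := hQtle (Sum.inl j) (Sum.inl j)
    simpa [omegaComp] using this
  have cδ : ∀ (i : Fin m) (j : Fin n), At i i + Dt j j ≤ ‖A i i + D j j‖ := by
    intro i j
    calc At i i + Dt j j ≤ wlin ω (A i i) + wlin ω (D j j) :=
          add_le_add (cAd i) (cDd j)
      _ = wlin ω (A i i + D j j) := (wlin_add ω _ _).symm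
      _ ≤ ‖A i i + D j j‖ := wlin_le_abs hω _
  have hAd : ∀ i, 0 < At i i := by
    intro i
    have h1 : (∑ k, At i k) ≤ At i i := by
      rw [← Finset.add_sum_erase Finset.univ (At i) (Finset.mem_univ i)]
      have : (∑ k ∈ Finset.univ.erase i, At i k) ≤ 0 :=
        Finset.sum_nonpos fun k hk => hAoff i k (Ne.symm (Finset.ne_of_mem_erase hk))
      linarith
    have h2 : (0:ℝ) ≤ ∑ l, Bt i l := Finset.sum_nonneg fun l _ => hBt i l
    linarith [hrowA i]
  have hDd : ∀ j, 0 < Dt j j := by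
    intro j
    have h1 : (∑ l, Dt j l) ≤ Dt j j := by
      rw [← Finset.add_sum_erase Finset.univ (Dt j) (Finset.mem_univ j)]
      have : (∑ l ∈ Finset.univ.erase j, Dt j l) ≤ 0 :=
        Finset.sum_nonpos fun l hl => hDoff j l (Ne.symm (Finset.ne_of_mem_erase hl))
      linarith
    have h2 : (0:ℝ) ≤ ∑ k, Ct j k := Finset.sum_nonneg fun k _ => hCt j k
    linarith [hrowD j]
  have hδ : ∀ (i : Fin m) (j : Fin n), 0 < At i i + Dt j j :=
    fun i j => add_pos (hAd i) (hDd j)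
  -- row bound on the minimal solution
  have hΦrow : ∀ i, (∑ j, Φt i j) ≤ 1 :=
    aux1 At Bt Ct Dt hAoff hDoff hBt hCt hrowA hrowD Φt hΦtPos hΦtSol hΦtMin
  -- fixed point identity for Φt
  have hfixΦ : ∀ i j, (At i i + Dt j j) * Φt i j =
      (∑ k, ∑ l, Φt i l * Ct l k * Φt k j) + Bt i j
      + (∑ k ∈ Finset.univ.erase i, (-At i k) * Φt k j)
      + (∑ l ∈ Finset.univ.erase j, (-Dt l j) * Φt i l) := by
    intro i j
    have hz := congrFun (congrFun hΦtSol i) j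
    rw [numid, Matrix.zero_apply] at hz
    linarith
  -- the closed-loop matrix M = Dt - Ct*Φt and its positive left vector y
  obtain ⟨M, hM⟩ : ∃ M : Matrix (Fin n) (Fin n) ℝ,
      ∀ l j, M l j = Dt l j - ∑ k, Ct l k * Φt k j :=
    ⟨Matrix.of fun l j => Dt l j - ∑ k, Ct l k * Φt k j, fun _ _ => rfl⟩
  have hMoff : ∀ l j, l ≠ j → M l j ≤ 0 := by
    intro l j hlj
    rw [hM]
    have h1 := hDoff l j hlj
    have h2 : (0:ℝ) ≤ ∑ k, Ct l k * Φt k j :=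
      Finset.sum_nonneg fun k _ => mul_nonneg (hCt l k) (hΦtPos k j)
    linarith
  have hMrow : ∀ l, 0 < ∑ j, M l j := by
    intro l
    have e1 : (∑ j, M l j) = (∑ j, Dt l j) - ∑ k, Ct l k * ∑ j, Φt k j := by
      calc (∑ j, M l j) = ∑ j, (Dt l j - ∑ k, Ct l k * Φt k j) :=
            Finset.sum_congr rfl fun j _ => hM l j
        _ = (∑ j, Dt l j) - ∑ j, ∑ k, Ct l k * Φt k j := Finset.sum_sub_distrib _ _
        _ = (∑ j, Dt l j) - ∑ k, Ct l k * ∑ j, Φt k j := by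
            congr 1
            rw [Finset.sum_comm]
            exact Finset.sum_congr rfl fun k _ => by rw [Finset.mul_sum]
    rw [e1]
    have h2 : (∑ k, Ct l k * ∑ j, Φt k j) ≤ ∑ k, Ct l k := by
      refine Finset.sum_le_sum fun k _ => ?_
      calc Ct l k * ∑ j, Φt k j ≤ Ct l k * 1 :=
          mul_le_mul_of_nonneg_left (hΦrow k) (hCt l k)
        _ = Ct l k := mul_one _
    linarith [hrowD l]
  obtain ⟨y, hy, hyM⟩ := aux2 M hMoff hMrow
  -- the vector x
  obtain ⟨Pm, hPm⟩ : ∃ P : Matrix (Fin m) (Fin m) ℝ,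
      ∀ i k, P i k = At i k - ∑ l, Φt i l * Ct l k :=
    ⟨Matrix.of fun i k => At i k - ∑ l, Φt i l * Ct l k, fun _ _ => rfl⟩
  have hrowEq : ∀ i, (∑ k, (∑ l, Φt i l * Ct l k) * ∑ j, Φt k j)
      - (∑ l, Φt i l * ∑ j, Dt l j) - (∑ k, At i k * ∑ j, Φt k j)
      + (∑ j, Bt i j) = 0 := by
    intro i
    have hz : ∀ j, (Φt * Ct * Φt) i j - (Φt * Dt) i j - (At * Φt) i j + Bt i j = 0 := by
      intro j
      have := congrFun (congrFun hΦtSol i) j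
      simpa [Matrix.sub_apply, Matrix.add_apply] using this
    have hsumz : (∑ j, ((Φt * Ct * Φt) i j - (Φt * Dt) i j - (At * Φt) i j + Bt i j)) = 0 :=
      Finset.sum_eq_zero fun j _ => hz j
    have e1 : (∑ j, (Φt * Ct * Φt) i j) = ∑ k, (∑ l, Φt i l * Ct l k) * ∑ j, Φt k j := by
      calc (∑ j, (Φt * Ct * Φt) i j) = ∑ j, ∑ k, (Φt * Ct) i k * Φt k j :=
            Finset.sum_congr rfl fun j _ => Matrix.mul_apply
        _ = ∑ k, ∑ j, (Φt * Ct) i k * Φt k j := Finset.sum_comm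
        _ = ∑ k, (Φt * Ct) i k * ∑ j, Φt k j := by
            exact Finset.sum_congr rfl fun k _ => by rw [Finset.mul_sum]
        _ = ∑ k, (∑ l, Φt i l * Ct l k) * ∑ j, Φt k j :=
            Finset.sum_congr rfl fun k _ => by rw [Matrix.mul_apply]
    have e2 : (∑ j, (Φt * Dt) i j) = ∑ l, Φt i l * ∑ j, Dt l j := by
      calc (∑ j, (Φt * Dt) i j) = ∑ j, ∑ l, Φt i l * Dt l j :=
            Finset.sum_congr rfl fun j _ => Matrix.mul_apply
        _ = ∑ l, ∑ j, Φt i l * Dt l j := Finset.sum_comm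
        _ = ∑ l, Φt i l * ∑ j, Dt l j :=
            Finset.sum_congr rfl fun l _ => by rw [Finset.mul_sum]
    have e3 : (∑ j, (At * Φt) i j) = ∑ k, At i k * ∑ j, Φt k j := by
      calc (∑ j, (At * Φt) i j) = ∑ j, ∑ k, At i k * Φt k j :=
            Finset.sum_congr rfl fun j _ => Matrix.mul_apply
        _ = ∑ k, ∑ j, At i k * Φt k j := Finset.sum_comm
        _ = ∑ k, At i k * ∑ j, Φt k j :=
            Finset.sum_congr rfl fun k _ => by rw [Finset.mul_sum]
    have esplit : (∑ j, ((Φt * Ct * Φt) i j - (Φt * Dt) i j - (At * Φt) i j + Bt i j))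
        = (∑ j, (Φt * Ct * Φt) i j) - (∑ j, (Φt * Dt) i j)
          - (∑ j, (At * Φt) i j) + ∑ j, Bt i j := by
      rw [Finset.sum_add_distrib, Finset.sum_sub_distrib, Finset.sum_sub_distrib]
    rw [esplit, e1, e2, e3] at hsumz
    linarith
  have hq : ∀ i, 0 < ∑ k, Pm i k * (1 - ∑ j, Φt k j) := by
    intro i
    have hqid : (∑ k, Pm i k * (1 - ∑ j, Φt k j))
        = ((∑ k, At i k) - ∑ j, Bt i j)
          + ∑ l, Φt i l * ((∑ j, Dt l j) - ∑ k, Ct l k) := by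
      have e0 : (∑ k, Pm i k * (1 - ∑ j, Φt k j))
          = (∑ k, At i k) - (∑ k, ∑ l, Φt i l * Ct l k)
            - (∑ k, At i k * ∑ j, Φt k j)
            + ∑ k, (∑ l, Φt i l * Ct l k) * ∑ j, Φt k j := by
        have : ∀ k, Pm i k * (1 - ∑ j, Φt k j)
            = At i k - (∑ l, Φt i l * Ct l k) - At i k * ∑ j, Φt k j
              + (∑ l, Φt i l * Ct l k) * ∑ j, Φt k j := by
          intro k
          rw [hPm]
          ring
        rw [Finset.sum_congr rfl fun k _ => this k, Finset.sum_add_distrib,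
          Finset.sum_sub_distrib, Finset.sum_sub_distrib]
      have e4 : (∑ k, ∑ l, Φt i l * Ct l k) = ∑ l, Φt i l * ∑ k, Ct l k := by
        rw [Finset.sum_comm]
        exact Finset.sum_congr rfl fun l _ => by rw [Finset.mul_sum]
      have e5 : (∑ l, Φt i l * ((∑ j, Dt l j) - ∑ k, Ct l k))
          = (∑ l, Φt i l * ∑ j, Dt l j) - ∑ l, Φt i l * ∑ k, Ct l k := by
        rw [← Finset.sum_sub_distrib]
        exact Finset.sum_congr rfl fun l _ => by ring
      rw [e0, e4, e5]
      have := hrowEq i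
      linarith
    rw [hqid]
    have h1 : (0:ℝ) < (∑ k, At i k) - ∑ j, Bt i j := by linarith [hrowA i]
    have h2 : (0:ℝ) ≤ ∑ l, Φt i l * ((∑ j, Dt l j) - ∑ k, Ct l k) :=
      Finset.sum_nonneg fun l _ => mul_nonneg (hΦtPos i l) (by linarith [hrowD l])
    linarith
  -- choose ε and the vector x
  set qmin := Finset.univ.inf' Finset.univ_nonempty
    (fun i => ∑ k, Pm i k * (1 - ∑ j, Φt k j)) with hqmindef
  have hqmin0 : 0 < qmin := (Finset.lt_inf'_iff _).2 fun i _ => hq i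
  have hqminle : ∀ i, qmin ≤ ∑ k, Pm i k * (1 - ∑ j, Φt k j) :=
    fun i => Finset.inf'_le _ (Finset.mem_univ i)
  set rmax := Finset.univ.sup' Finset.univ_nonempty (fun i => |∑ k, Pm i k|) with hrmaxdef
  have hrmax0 : 0 ≤ rmax :=
    le_trans (abs_nonneg _) (Finset.le_sup' (fun i => |∑ k, Pm i k|)
      (Finset.mem_univ (Classical.arbitrary (Fin m))))
  have hrmaxle : ∀ i, |∑ k, Pm i k| ≤ rmax :=
    fun i => Finset.le_sup' (fun i => |∑ k, Pm i k|) (Finset.mem_univ i)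
  set ε := qmin / (2 * (rmax + 1)) with hεdef
  have hε0 : 0 < ε := by
    rw [hεdef]
    positivity
  set x : Fin m → ℝ := fun i => 1 - (∑ j, Φt i j) + ε with hxdef
  have hx : ∀ i, 0 < x i := by
    intro i
    have := hΦrow i
    simp only [hxdef]
    linarith
  have hPx : ∀ i, 0 < ∑ k, Pm i k * x k := by
    intro i
    have hsplit : (∑ k, Pm i k * x k)
        = (∑ k, Pm i k * (1 - ∑ j, Φt k j)) + ε * ∑ k, Pm i k := by
      rw [Finset.mul_sum, ← Finset.sum_add_distrib]
      exact Finset.sum_congr rfl fun k _ => by simp only [hxdef]; ring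
    rw [hsplit]
    have h1 : ε * rmax < qmin := by
      rw [hεdef]
      rw [div_mul_eq_mul_div, div_lt_iff₀ (by linarith : (0:ℝ) < 2 * (rmax + 1))]
      nlinarith
    have h2 : ε * (∑ k, Pm i k) ≥ -(ε * rmax) := by
      have habs := hrmaxle i
      have hge : (∑ k, Pm i k) ≥ -rmax := by
        have := neg_abs_le (∑ k, Pm i k)
        linarith [abs_le.1 (le_refl |∑ k, Pm i k|)]
      nlinarith
    have h3 := hqminle i
    linarith
  -- the gap inequality
  have hgap : ∀ (i : Fin m) (j : Fin n),
      (∑ k, ∑ l, (x i * y l) * Ct l k * Φt k j)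
      + (∑ k, ∑ l, Φt i l * Ct l k * (x k * y j))
      + (∑ k ∈ Finset.univ.erase i, (-At i k) * (x k * y j))
      + (∑ l ∈ Finset.univ.erase j, (-Dt l j) * (x i * y l))
      < (At i i + Dt j j) * (x i * y j) := by
    intro i j
    have t1 : (∑ k, ∑ l, (x i * y l) * Ct l k * Φt k j)
        = x i * ∑ l, y l * (∑ k, Ct l k * Φt k j) := by
      rw [Finset.sum_comm]
      rw [Finset.mul_sum]
      refine Finset.sum_congr rfl fun l _ => ?_
      rw [Finset.mul_sum, Finset.mul_sum]
      exact Finset.sum_congr rfl fun k _ => by ring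
    have t2 : (∑ k, ∑ l, Φt i l * Ct l k * (x k * y j))
        = y j * ∑ k, (∑ l, Φt i l * Ct l k) * x k := by
      rw [Finset.mul_sum]
      refine Finset.sum_congr rfl fun k _ => ?_
      rw [Finset.sum_mul, Finset.mul_sum]
      exact Finset.sum_congr rfl fun l _ => by ring
    have t3 : (∑ k ∈ Finset.univ.erase i, (-At i k) * (x k * y j))
        = (∑ k, (-At i k) * (x k * y j)) + At i i * (x i * y j) := by
      rw [Finset.sum_erase_eq_sub (Finset.mem_univ i)]
      ring
    have t4 : (∑ l ∈ Finset.univ.erase j, (-Dt l j) * (x i * y l))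
        = (∑ l, (-Dt l j) * (x i * y l)) + Dt j j * (x i * y j) := by
      rw [Finset.sum_erase_eq_sub (Finset.mem_univ j)]
      ring
    have u3 : (∑ k, (-At i k) * (x k * y j)) = -(∑ k, At i k * x k) * y j := by
      rw [show (∑ k, (-At i k) * (x k * y j)) = ∑ k, (-(At i k * x k)) * y j from
        Finset.sum_congr rfl fun k _ => by ring, ← Finset.sum_mul, Finset.sum_neg_distrib]
    have u4 : (∑ l, (-Dt l j) * (x i * y l)) = -(∑ l, y l * Dt l j) * x i := by
      rw [show (∑ l, (-Dt l j) * (x i * y l)) = ∑ l, (-(y l * Dt l j)) * x i from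
        Finset.sum_congr rfl fun l _ => by ring, ← Finset.sum_mul, Finset.sum_neg_distrib]
    have e1 : (∑ k, Pm i k * x k)
        = (∑ k, At i k * x k) - ∑ k, (∑ l, Φt i l * Ct l k) * x k := by
      rw [← Finset.sum_sub_distrib]
      exact Finset.sum_congr rfl fun k _ => by rw [hPm]; ring
    have e2 : (∑ l, y l * M l j)
        = (∑ l, y l * Dt l j) - ∑ l, y l * (∑ k, Ct l k * Φt k j) := by
      rw [← Finset.sum_sub_distrib]
      exact Finset.sum_congr rfl fun l _ => by rw [hM]; ring
    have hid : (At i i + Dt j j) * (x i * y j)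
        - ((∑ k, ∑ l, (x i * y l) * Ct l k * Φt k j)
          + (∑ k, ∑ l, Φt i l * Ct l k * (x k * y j))
          + (∑ k ∈ Finset.univ.erase i, (-At i k) * (x k * y j))
          + (∑ l ∈ Finset.univ.erase j, (-Dt l j) * (x i * y l)))
        = y j * (∑ k, Pm i k * x k) + x i * (∑ l, y l * M l j) := by
      rw [t1, t2, t3, t4, u3, u4, e1, e2]
      ring
    have hpos : 0 < y j * (∑ k, Pm i k * x k) + x i * (∑ l, y l * M l j) := by
      have p1 := mul_pos (hy j) (hPx i)
      have p2 := mul_pos (hx i) (hyM j)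
      linarith
    linarith [hid, hpos]
  exact aux3 A B C D At Bt Ct Dt Φt hΦtPos hδ cδ cA cB cC cD hfixΦ x y hx hy hgap
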